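/- Let t ∈ 𝒮'(ℝ^N × ℝ^M) satisfy t(q,q') = O^dist(|q|^δ). Then there exist neighborhoods 𝒪₁ of 0 in ℝ^N and 𝒪₂ of 0 in ℝ^M such that: (i) for every g ∈ 𝒮(ℝ^N) with supp g ⊂ 𝒪₁, the tempered distribution on ℝ^M given by h ↦ ⟨t, g ⊗ h⟩ agrees on 𝒪₂ with a continuous function q' ↦ T_g(q'); (ii) for each such g the limit lim_{q'→0} T_g(q') exists, and the assignment g ↦ lim_{q'→0} T_g(q') defines a distribution t(·,0) on 𝒪₁ which satisfies t(q,0) = O^dist(|q|^δ). -/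

import Mathlib

open MeasureTheory SchwartzMap Filter Topology

noncomputable section

abbrev Euc (N : ℕ) : Type := EuclideanSpace ℝ (Fin N)

/-- The basis direction in `ℝ^N × ℝ^M` corresponding to the `i`-th `q`-coordinate. -/
def qDir (N M : ℕ) (i : Fin N) : Euc N × Euc M := (EuclideanSpace.single i 1, 0)

/-- Iterated partial derivative `∂_q^α` (multi-index `α` over the `q`-variables) on Schwartz
functions on `ℝ^N × ℝ^M`. -/
def multiDerivQ {N M : ℕ} (α : Fin N → ℕ) :
    𝓢(Euc N × Euc M, ℂ) →L[ℂ] 𝓢(Euc N × Euc M, ℂ) :=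
  (Finset.univ.toList (α := Fin N)).foldr
    (fun i A =>
      ((LineDeriv.lineDerivOpCLM ℂ 𝓢(Euc N × Euc M, ℂ) (qDir N M i) :
          𝓢(Euc N × Euc M, ℂ) →L[ℂ] 𝓢(Euc N × Euc M, ℂ)) ^ (α i)).comp A)
    (ContinuousLinearMap.id ℂ _)

/-- `t(q,q') = O^dist(|q|^δ)` : the regularity condition of Duch, Def. 2.9.
There are a neighbourhood `O` of the origin in `ℝ^N × ℝ^M`, a constant `C > 0` and continuous
functions `tc α` on `O` (`α` a multi-index over the `q`-variables), all but finitely many zero,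
vanishing when `δ + |α| < 0`, bounded by `C |q|^{δ+|α|}`, such that
`t = Σ_α ∂_q^α (tc α)` on test functions supported in `O`. -/
def OBig {N M : ℕ} (t : 𝓢(Euc N × Euc M, ℂ) →L[ℂ] ℂ) (δ : ℝ) : Prop :=
  ∃ O : Set (Euc N × Euc M), IsOpen O ∧ (0 : Euc N × Euc M) ∈ O ∧
  ∃ C : ℝ, 0 < C ∧
  ∃ tc : (Fin N → ℕ) → Euc N × Euc M → ℂ,
    {α | tc α ≠ 0}.Finite ∧
    (∀ α, ContinuousOn (tc α) O) ∧
    (∀ α : Fin N → ℕ, δ + ((∑ i, α i : ℕ) : ℝ) < 0 → tc α = 0) ∧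
    (∀ α : Fin N → ℕ, ∀ x ∈ O, ‖tc α x‖ ≤ C * ‖x.1‖ ^ (δ + ((∑ i, α i : ℕ) : ℝ))) ∧
    (∀ g : 𝓢(Euc N × Euc M, ℂ), HasCompactSupport ⇑g → tsupport ⇑g ⊆ O →
      t g = ∑ᶠ α : Fin N → ℕ,
        (-1 : ℂ) ^ ((∑ i, α i : ℕ)) * ∫ x in O, tc α x * multiDerivQ α g x)

/-- Iterated partial derivative `∂^α` on Schwartz functions on `ℝ^N`. -/
def multiDerivN {N : ℕ} (α : Fin N → ℕ) : 𝓢(Euc N, ℂ) →L[ℂ] 𝓢(Euc N, ℂ) :=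
  (Finset.univ.toList (α := Fin N)).foldr
    (fun i A =>
      ((LineDeriv.lineDerivOpCLM ℂ 𝓢(Euc N, ℂ) (EuclideanSpace.single i 1 : Euc N) :
          𝓢(Euc N, ℂ) →L[ℂ] 𝓢(Euc N, ℂ)) ^ (α i)).comp A)
    (ContinuousLinearMap.id ℂ _)

/-- `v(q) = O^dist(|q|^δ)` for a tempered distribution `v` on `ℝ^N` (Def. 2.9, `M = 0`). -/
def OBigN {N : ℕ} (v : 𝓢(Euc N, ℂ) →L[ℂ] ℂ) (δ : ℝ) : Prop :=
  ∃ O : Set (Euc N), IsOpen O ∧ (0 : Euc N) ∈ O ∧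
  ∃ C : ℝ, 0 < C ∧
  ∃ tc : (Fin N → ℕ) → Euc N → ℂ,
    {α | tc α ≠ 0}.Finite ∧
    (∀ α, ContinuousOn (tc α) O) ∧
    (∀ α : Fin N → ℕ, δ + ((∑ i, α i : ℕ) : ℝ) < 0 → tc α = 0) ∧
    (∀ α : Fin N → ℕ, ∀ q ∈ O, ‖tc α q‖ ≤ C * ‖q‖ ^ (δ + ((∑ i, α i : ℕ) : ℝ))) ∧
    (∀ g : 𝓢(Euc N, ℂ), HasCompactSupport ⇑g → tsupport ⇑g ⊆ O →
      v g = ∑ᶠ α : Fin N → ℕ,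
        (-1 : ℂ) ^ ((∑ i, α i : ℕ)) * ∫ q in O, tc α q * multiDerivN α g q)


section AuxLemmas

/-- Derivative of a tensor product in a `q`-direction. -/
lemma pderiv_tensor {N M : ℕ} (g : 𝓢(Euc N, ℂ)) (h : 𝓢(Euc M, ℂ))
    (k : 𝓢(Euc N × Euc M, ℂ)) (hk : ∀ x, k x = g x.1 * h x.2) (i : Fin N) :
    ∀ x, LineDeriv.lineDerivOpCLM ℂ 𝓢(Euc N × Euc M, ℂ) (qDir N M i) k x
      = LineDeriv.lineDerivOpCLM ℂ 𝓢(Euc N, ℂ) (EuclideanSpace.single i 1 : Euc N) g x.1 * h x.2 := by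
  intro x
  have hkf : ⇑k = fun x : Euc N × Euc M => g x.1 * h x.2 := funext hk
  rw [LineDeriv.lineDerivOpCLM_apply, LineDeriv.lineDerivOpCLM_apply,
    lineDerivOp_apply_eq_fderiv, lineDerivOp_apply_eq_fderiv, hkf]
  have h1 : HasFDerivAt (fun x : Euc N × Euc M => g x.1)
      ((fderiv ℝ g x.1).comp (ContinuousLinearMap.fst ℝ (Euc N) (Euc M))) x :=
    (g.differentiableAt.hasFDerivAt).comp x (hasFDerivAt_fst)
  have h2 : HasFDerivAt (fun x : Euc N × Euc M => h x.2)
      ((fderiv ℝ h x.2).comp (ContinuousLinearMap.snd ℝ (Euc N) (Euc M))) x :=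
    (h.differentiableAt.hasFDerivAt).comp x (hasFDerivAt_snd)
  have : fderiv ℝ (fun x : Euc N × Euc M => g x.1 * h x.2) x = _ := (h1.mul h2).fderiv
  rw [this]
  simp [qDir, mul_comm]

lemma pow_tensor {N M : ℕ} (h : 𝓢(Euc M, ℂ)) (i : Fin N) (n : ℕ) :
    ∀ (k : 𝓢(Euc N × Euc M, ℂ)) (g : 𝓢(Euc N, ℂ)), (∀ x, k x = g x.1 * h x.2) →
    ∀ x, ((LineDeriv.lineDerivOpCLM ℂ 𝓢(Euc N × Euc M, ℂ) (qDir N M i)) ^ n) k x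
      = ((LineDeriv.lineDerivOpCLM ℂ 𝓢(Euc N, ℂ) (EuclideanSpace.single i 1 : Euc N) :
          𝓢(Euc N, ℂ) →L[ℂ] 𝓢(Euc N, ℂ)) ^ n) g x.1 * h x.2 := by
  induction n with
  | zero => intro k g hk x; simpa using hk x
  | succ n ih =>
    intro k g hk x
    rw [pow_succ, pow_succ, ContinuousLinearMap.mul_apply, ContinuousLinearMap.mul_apply]
    exact ih _ _ (pderiv_tensor g h k hk i) x

lemma foldr_tensor {N M : ℕ} (h : 𝓢(Euc M, ℂ)) (α : Fin N → ℕ) (l : List (Fin N)) :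
    ∀ (k : 𝓢(Euc N × Euc M, ℂ)) (g : 𝓢(Euc N, ℂ)), (∀ x, k x = g x.1 * h x.2) →
    ∀ x, (l.foldr (fun i A =>
        ((LineDeriv.lineDerivOpCLM ℂ 𝓢(Euc N × Euc M, ℂ) (qDir N M i) :
          𝓢(Euc N × Euc M, ℂ) →L[ℂ] 𝓢(Euc N × Euc M, ℂ)) ^ (α i)).comp A)
        (ContinuousLinearMap.id ℂ _)) k x
      = (l.foldr (fun i A =>
        ((LineDeriv.lineDerivOpCLM ℂ 𝓢(Euc N, ℂ) (EuclideanSpace.single i 1 : Euc N) :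
          𝓢(Euc N, ℂ) →L[ℂ] 𝓢(Euc N, ℂ)) ^ (α i)).comp A)
        (ContinuousLinearMap.id ℂ _)) g x.1 * h x.2 := by
  induction l with
  | nil => intro k g hk x; exact hk x
  | cons i l ih =>
    intro k g hk x
    simp only [List.foldr_cons, ContinuousLinearMap.comp_apply]
    exact pow_tensor h i (α i) _ _ (fun y => ih k g hk y) x

lemma multiDerivQ_tensor {N M : ℕ} (h : 𝓢(Euc M, ℂ)) (α : Fin N → ℕ)
    (k : 𝓢(Euc N × Euc M, ℂ)) (g : 𝓢(Euc N, ℂ)) (hk : ∀ x, k x = g x.1 * h x.2) :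
    ∀ x, multiDerivQ α k x = multiDerivN α g x.1 * h x.2 :=
  foldr_tensor h α (Finset.univ.toList) k g hk

lemma tsupport_pderiv {N : ℕ} (m : Euc N) (g : 𝓢(Euc N, ℂ)) :
    tsupport ⇑(LineDeriv.lineDerivOpCLM ℂ 𝓢(Euc N, ℂ) m g) ⊆ tsupport ⇑g := by
  apply closure_minimal _ (isClosed_tsupport _)
  intro x hx
  simp only [Function.mem_support, LineDeriv.lineDerivOpCLM_apply, lineDerivOp_apply_eq_fderiv] at hx
  have : fderiv ℝ (⇑g) x ≠ 0 := fun hz => hx (by rw [hz]; rfl)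
  exact (support_fderiv_subset ℝ) this

lemma tsupport_pow_pderiv {N : ℕ} (m : Euc N) (n : ℕ) :
    ∀ g : 𝓢(Euc N, ℂ),
    tsupport ⇑(((LineDeriv.lineDerivOpCLM ℂ 𝓢(Euc N, ℂ) m : 𝓢(Euc N, ℂ) →L[ℂ] 𝓢(Euc N, ℂ)) ^ n) g)
      ⊆ tsupport ⇑g := by
  induction n with
  | zero => simp
  | succ n ih =>
    intro g
    rw [pow_succ, ContinuousLinearMap.mul_apply]
    exact (ih _).trans (tsupport_pderiv m g)

lemma tsupport_foldr {N : ℕ} (α : Fin N → ℕ) (l : List (Fin N)) (g : 𝓢(Euc N, ℂ)) :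
    tsupport ⇑((l.foldr (fun i A =>
        ((LineDeriv.lineDerivOpCLM ℂ 𝓢(Euc N, ℂ) (EuclideanSpace.single i 1 : Euc N) :
          𝓢(Euc N, ℂ) →L[ℂ] 𝓢(Euc N, ℂ)) ^ (α i)).comp A)
        (ContinuousLinearMap.id ℂ _)) g) ⊆ tsupport ⇑g := by
  induction l with
  | nil => simp
  | cons i l ih =>
    simp only [List.foldr_cons, ContinuousLinearMap.comp_apply]
    exact (tsupport_pow_pderiv _ _ _).trans ih

lemma tsupport_multiDerivN {N : ℕ} (α : Fin N → ℕ) (g : 𝓢(Euc N, ℂ)) :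
    tsupport ⇑(multiDerivN α g) ⊆ tsupport ⇑g :=
  tsupport_foldr α _ g

end AuxLemmas

set_option maxHeartbeats 1000000 in
/-- remark (3) after Def. 2.9 in Duch; restriction `t(·,0)`.
If `t(q,q') = O^dist(|q|^δ)` then there are neighbourhoods `O₁ ∋ 0`, `O₂ ∋ 0` such that for
every test function `g` supported in `O₁`, the distribution `h ↦ ⟨t, g ⊗ h⟩` agrees on `O₂`
with a continuous function `T g`, the limit of `T g` at `0` exists, and `g ↦ lim_{q'→0} T g`
defines a distribution `t(·,0)` on `O₁` satisfying `t(q,0) = O^dist(|q|^δ)`. -/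
theorem stmt7 (N M : ℕ) (t : 𝓢(Euc N × Euc M, ℂ) →L[ℂ] ℂ) (δ : ℝ) (hO : OBig t δ) :
    ∃ O₁ : Set (Euc N), IsOpen O₁ ∧ (0 : Euc N) ∈ O₁ ∧
    ∃ O₂ : Set (Euc M), IsOpen O₂ ∧ (0 : Euc M) ∈ O₂ ∧
    ∃ T : 𝓢(Euc N, ℂ) → Euc M → ℂ,
    ∃ v : 𝓢(Euc N, ℂ) →L[ℂ] ℂ,
      (∀ g : 𝓢(Euc N, ℂ), HasCompactSupport ⇑g → tsupport ⇑g ⊆ O₁ →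
        ContinuousOn (T g) O₂ ∧
        (∀ h : 𝓢(Euc M, ℂ), HasCompactSupport ⇑h → tsupport ⇑h ⊆ O₂ →
          ∀ k : 𝓢(Euc N × Euc M, ℂ), (∀ x : Euc N × Euc M, k x = g x.1 * h x.2) →
            t k = ∫ q' in O₂, T g q' * h q') ∧
        Tendsto (T g) (𝓝 (0 : Euc M)) (𝓝 (v g))) ∧
      OBigN v δ := by
  classical
  obtain ⟨O, hOo, hO0, C, hC, tc, hfin, hcont, hvan, hbound, hrep⟩ := hO
  obtain ⟨ε, hε, hball⟩ := Metric.isOpen_iff.mp hOo 0 hO0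
  set O₁ : Set (Euc N) := Metric.ball 0 ε with hO1def
  set O₂ : Set (Euc M) := Metric.ball 0 ε with hO2def
  have hsub : O₁ ×ˢ O₂ ⊆ O := by
    refine Set.Subset.trans ?_ hball
    rw [hO1def, hO2def, ball_prod_same, Prod.mk_zero_zero]
  have h01 : (0 : Euc N) ∈ O₁ := Metric.mem_ball_self hε
  have h02 : (0 : Euc M) ∈ O₂ := Metric.mem_ball_self hε
  have hO1o : IsOpen O₁ := Metric.isOpen_ball
  have hO2o : IsOpen O₂ := Metric.isOpen_ball
  have hmO1 : MeasurableSet O₁ := hO1o.measurableSet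
  have hmO2 : MeasurableSet O₂ := hO2o.measurableSet
  have hfO1 : volume O₁ < ⊤ := measure_ball_lt_top
  have hfO2 : volume O₂ < ⊤ := measure_ball_lt_top
  set sFin : Finset (Fin N → ℕ) := hfin.toFinset with hsFin
  have hmem : ∀ α : Fin N → ℕ, α ∈ sFin ↔ tc α ≠ 0 := fun α => hfin.mem_toFinset
  set Bnd : (Fin N → ℕ) → ℝ := fun α => C * ε ^ (δ + ((∑ i, α i : ℕ) : ℝ)) with hBnd
  have hBndpos : ∀ α, 0 ≤ Bnd α := by
    intro α
    have h1 := Real.rpow_pos_of_pos hε (δ + ((∑ i, α i : ℕ) : ℝ))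
    rw [hBnd]
    positivity
  have hbd : ∀ (α) (x), x ∈ O₁ ×ˢ O₂ → ‖tc α x‖ ≤ Bnd α := by
    intro α x hx
    by_cases hz : tc α = 0
    · rw [hz]; simpa using hBndpos α
    · refine (hbound α x (hsub hx)).trans (mul_le_mul_of_nonneg_left ?_ hC.le)
      have hxe : ‖x.1‖ < ε := mem_ball_zero_iff.mp hx.1
      have he : 0 ≤ δ + ((∑ i, α i : ℕ) : ℝ) := le_of_not_gt fun hlt => hz (hvan α hlt)
      exact Real.rpow_le_rpow (norm_nonneg _) hxe.le he
  have hW1 : ∀ (α) (q' : Euc M), q' ∈ O₂ → ContinuousOn (fun q => tc α (q, q')) O₁ := by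
    intro α q' hq'
    exact (hcont α).comp (Continuous.continuousOn (Continuous.prodMk continuous_id continuous_const))
      (fun q hq => hsub (Set.mk_mem_prod hq hq'))
  have hW2 : ∀ (α) (q : Euc N), q ∈ O₁ → ContinuousOn (fun q' => tc α (q, q')) O₂ := by
    intro α q hq
    exact (hcont α).comp (Continuous.continuousOn (Continuous.prodMk continuous_const continuous_id))
      (fun q' hq' => hsub (Set.mk_mem_prod hq hq'))
  have hSn : ∀ (f : 𝓢(Euc N, ℂ)) (q : Euc N), ‖f q‖ ≤ SchwartzMap.seminorm ℂ 0 0 f :=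
    fun f q => norm_le_seminorm ℂ f q
  have hSm : ∀ (f : 𝓢(Euc M, ℂ)) (q : Euc M), ‖f q‖ ≤ SchwartzMap.seminorm ℂ 0 0 f :=
    fun f q => norm_le_seminorm ℂ f q
  have hIntN : ∀ (α) (q' : Euc M), q' ∈ O₂ → ∀ f : 𝓢(Euc N, ℂ),
      IntegrableOn (fun q => tc α (q, q') * f q) O₁ := by
    intro α q' hq' f
    refine ⟨((hW1 α q' hq').mul f.continuous.continuousOn).aestronglyMeasurable hmO1, ?_⟩
    refine HasFiniteIntegral.restrict_of_bounded
      (C := Bnd α * SchwartzMap.seminorm ℂ 0 0 f) hfO1 ?_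
    filter_upwards [ae_restrict_mem hmO1] with q hq
    rw [norm_mul]
    exact mul_le_mul (hbd α (q, q') (Set.mk_mem_prod hq hq')) (hSn f q)
      (norm_nonneg _) (hBndpos α)
  set Inn : (Fin N → ℕ) → 𝓢(Euc N, ℂ) → Euc M → ℂ :=
    fun α g q' => ∫ q in O₁, tc α (q, q') * multiDerivN α g q with hInn
  have hInnCont : ∀ α g, ContinuousOn (Inn α g) O₂ := by
    intro α g
    apply continuousOn_of_dominated
      (bound := fun _ => Bnd α * SchwartzMap.seminorm ℂ 0 0 (multiDerivN α g))
    · exact fun q' hq' => (hIntN α q' hq' (multiDerivN α g)).1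
    · intro q' hq'
      filter_upwards [ae_restrict_mem hmO1] with q hq
      rw [norm_mul]
      exact mul_le_mul (hbd α (q, q') (Set.mk_mem_prod hq hq')) (hSn _ q)
        (norm_nonneg _) (hBndpos α)
    · exact integrableOn_const hfO1.ne
    · filter_upwards [ae_restrict_mem hmO1] with q hq
      exact (hW2 α q hq).mul continuousOn_const
  have hInnBdd : ∀ (α) (g : 𝓢(Euc N, ℂ)) (q'), q' ∈ O₂ →
      ‖Inn α g q'‖ ≤ Bnd α * SchwartzMap.seminorm ℂ 0 0 (multiDerivN α g)
        * (volume O₁).toReal := by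
    intro α g q' hq'
    rw [hInn]
    refine (norm_setIntegral_le_of_norm_le_const
      (C := Bnd α * SchwartzMap.seminorm ℂ 0 0 (multiDerivN α g)) hfO1 (fun q hq => ?_)
      ).trans (le_of_eq (by rw [measureReal_def]))
    rw [norm_mul]
    exact mul_le_mul (hbd α (q, q') (Set.mk_mem_prod hq hq')) (hSn _ q)
      (norm_nonneg _) (hBndpos α)
  set T : 𝓢(Euc N, ℂ) → Euc M → ℂ :=
    fun g q' => ∑ α ∈ sFin, (-1 : ℂ) ^ ((∑ i, α i : ℕ)) * Inn α g q' with hT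
  have hLkey : ∀ (α) (f : 𝓢(Euc N, ℂ)),
      ‖∫ q in O₁, tc α (q, 0) * f q‖
        ≤ Bnd α * (volume O₁).toReal * SchwartzMap.seminorm ℂ 0 0 f := by
    intro α f
    refine (norm_setIntegral_le_of_norm_le_const
      (C := Bnd α * SchwartzMap.seminorm ℂ 0 0 f) hfO1 (fun q hq => ?_)
      ).trans (le_of_eq (by rw [measureReal_def]; ring))
    rw [norm_mul]
    exact mul_le_mul (hbd α (q, 0) (Set.mk_mem_prod hq h02)) (hSn f q)
      (norm_nonneg _) (hBndpos α)
  set L : (Fin N → ℕ) → (𝓢(Euc N, ℂ) →L[ℂ] ℂ) := fun α =>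
    SchwartzMap.mkCLMtoNormedSpace (fun f => ∫ q in O₁, tc α (q, 0) * f q)
      (fun f g => by
        have h1 := hIntN α 0 h02 f
        have h2 := hIntN α 0 h02 g
        simp only [SchwartzMap.add_apply, mul_add]
        exact integral_add h1 h2)
      (fun a f => by
        simp only [SchwartzMap.smul_apply, smul_eq_mul, RingHom.id_apply]
        rw [← integral_const_mul]
        congr 1; funext q; ring)
      ⟨{(0, 0)}, Bnd α * (volume O₁).toReal,
        mul_nonneg (hBndpos α) ENNReal.toReal_nonneg, fun f => by
        simpa [schwartzSeminormFamily] using hLkey α f⟩ with hL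
  have hLapp : ∀ α f, L α f = ∫ q in O₁, tc α (q, 0) * f q := fun α f => rfl
  set v : 𝓢(Euc N, ℂ) →L[ℂ] ℂ :=
    ∑ α ∈ sFin, ((-1 : ℂ) ^ ((∑ i, α i : ℕ))) • ((L α).comp (multiDerivN α)) with hv
  have hvapp : ∀ g : 𝓢(Euc N, ℂ), v g = T g 0 := by
    intro g
    rw [hv, hT, ContinuousLinearMap.sum_apply]
    refine Finset.sum_congr rfl fun α _ => ?_
    rw [ContinuousLinearMap.smul_apply, ContinuousLinearMap.comp_apply, smul_eq_mul, hLapp]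
  refine ⟨O₁, hO1o, h01, O₂, hO2o, h02, T, v, ?_, ?_⟩
  · intro g hgc hgs
    have hTgcont : ContinuousOn (T g) O₂ := by
      rw [hT]
      exact continuousOn_finset_sum _ fun α _ => continuousOn_const.mul (hInnCont α g)
    refine ⟨hTgcont, ?_, ?_⟩
    · intro h hhc hhs k hk
      have hksupp : tsupport ⇑k ⊆ (tsupport ⇑g) ×ˢ (tsupport ⇑h) := by
        apply closure_minimal _ ((isClosed_tsupport _).prod (isClosed_tsupport _))
        intro x hx
        rw [Function.mem_support, hk x] at hx
        exact Set.mk_mem_prod (subset_closure (left_ne_zero_of_mul hx))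
          (subset_closure (right_ne_zero_of_mul hx))
      have hkc : HasCompactSupport ⇑k :=
        IsCompact.of_isClosed_subset (hgc.prod hhc) (isClosed_tsupport _) hksupp
      have hkO : tsupport ⇑k ⊆ O :=
        hksupp.trans ((Set.prod_mono hgs hhs).trans hsub)
      have hrepk := hrep k hkc hkO
      have hds : ∀ β : Fin N → ℕ, tsupport ⇑(multiDerivN β g) ⊆ O₁ :=
        fun β => (tsupport_multiDerivN β g).trans hgs
      have hstep : ∀ α : Fin N → ℕ,
          ∫ x in O, tc α x * multiDerivQ α k x = ∫ q' in O₂, Inn α g q' * h q' := by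
        intro α
        have heq : (fun x : Euc N × Euc M => tc α x * multiDerivQ α k x)
            = fun x => tc α x * (multiDerivN α g x.1 * h x.2) :=
          funext fun x => by rw [multiDerivQ_tensor h α k g hk x]
        rw [heq]
        set F : Euc N × Euc M → ℂ := fun x => tc α x * (multiDerivN α g x.1 * h x.2) with hF
        have hvanish : ∀ x : Euc N × Euc M, x ∉ O₁ ×ˢ O₂ → F x = 0 := by
          intro x hx
          rw [Set.mem_prod, not_and_or] at hx
          rcases hx with hx | hx
          · have hz : multiDerivN α g x.1 = 0 :=
              image_eq_zero_of_notMem_tsupport (fun hmm => hx (hds α hmm))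
            simp [hF, hz]
          · have hz : h x.2 = 0 := image_eq_zero_of_notMem_tsupport (fun hmm => hx (hhs hmm))
            simp [hF, hz]
        have hFm : AEStronglyMeasurable F
            ((volume : Measure (Euc N × Euc M)).restrict (O₁ ×ˢ O₂)) := by
          apply ContinuousOn.aestronglyMeasurable _ (hmO1.prod hmO2)
          exact ((hcont α).mono hsub).mul
            (((multiDerivN α g).continuous.comp continuous_fst).mul
              (h.continuous.comp continuous_snd)).continuousOn
        have hprodfin : volume (O₁ ×ˢ O₂) < ⊤ := by
          rw [Measure.volume_eq_prod, Measure.prod_prod]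
          exact ENNReal.mul_lt_top hfO1 hfO2
        have hFint : IntegrableOn F (O₁ ×ˢ O₂) := by
          refine ⟨hFm, HasFiniteIntegral.restrict_of_bounded
            (C := Bnd α * (SchwartzMap.seminorm ℂ 0 0 (multiDerivN α g)
              * SchwartzMap.seminorm ℂ 0 0 h)) hprodfin ?_⟩
          filter_upwards [ae_restrict_mem (hmO1.prod hmO2)] with x hx
          rw [hF]
          calc ‖tc α x * (multiDerivN α g x.1 * h x.2)‖
              = ‖tc α x‖ * ‖multiDerivN α g x.1 * h x.2‖ := norm_mul _ _
            _ ≤ Bnd α * (SchwartzMap.seminorm ℂ 0 0 (multiDerivN α g)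
                * SchwartzMap.seminorm ℂ 0 0 h) := by
                refine mul_le_mul (hbd α x hx) ?_ (norm_nonneg _) (hBndpos α)
                rw [norm_mul]
                exact mul_le_mul (hSn _ _) (hSm _ _) (norm_nonneg _) (apply_nonneg _ _)
        have h2 : ∫ x in O, F x = ∫ x in O₁ ×ˢ O₂, F x := by
          rw [← integral_indicator hOo.measurableSet, ← integral_indicator (hmO1.prod hmO2)]
          congr 1
          funext x
          by_cases hx : x ∈ O₁ ×ˢ O₂
          · rw [Set.indicator_of_mem hx, Set.indicator_of_mem (hsub hx)]
          · rw [Set.indicator_of_notMem hx]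
            by_cases hx2 : x ∈ O
            · rw [Set.indicator_of_mem hx2, hvanish x hx]
            · rw [Set.indicator_of_notMem hx2]
        have h3 : ∫ x in O₁ ×ˢ O₂, F x = ∫ q' in O₂, ∫ q in O₁, F (q, q') := by
          have hFint' : Integrable F ((volume.restrict O₁).prod (volume.restrict O₂)) := by
            rw [Measure.prod_restrict, ← Measure.volume_eq_prod]
            exact hFint
          have hsw := integral_prod_symm F hFint'
          rw [Measure.prod_restrict, ← Measure.volume_eq_prod] at hsw
          exact hsw
        rw [h2, h3]
        congr 1
        funext q'
        rw [hInn, ← integral_mul_const]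
        congr 1
        funext q
        rw [hF]
        ring
      rw [hrepk]
      have hfs : (Function.support fun α : Fin N → ℕ =>
          (-1 : ℂ) ^ ((∑ i, α i : ℕ)) * ∫ x in O, tc α x * multiDerivQ α k x) ⊆ ↑sFin := by
        intro α hα
        rw [Function.mem_support] at hα
        rw [Finset.mem_coe, hmem]
        intro h0
        exact hα (by simp [h0])
      rw [finsum_eq_sum_of_support_subset _ hfs]
      have hint2 : ∀ α ∈ sFin, Integrable
          (fun q' => (-1 : ℂ) ^ ((∑ i, α i : ℕ)) * (Inn α g q' * h q'))
          (volume.restrict O₂) := by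
        intro α _
        refine Integrable.const_mul ?_ _
        refine ⟨((hInnCont α g).mul h.continuous.continuousOn).aestronglyMeasurable hmO2,
          HasFiniteIntegral.restrict_of_bounded
          (C := Bnd α * SchwartzMap.seminorm ℂ 0 0 (multiDerivN α g) * (volume O₁).toReal
            * SchwartzMap.seminorm ℂ 0 0 h) hfO2 ?_⟩
        filter_upwards [ae_restrict_mem hmO2] with q' hq'
        rw [norm_mul]
        exact mul_le_mul (hInnBdd α g q' hq') (hSm h q') (norm_nonneg _)
          (mul_nonneg (mul_nonneg (hBndpos α) (apply_nonneg _ _)) ENNReal.toReal_nonneg)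
      calc ∑ α ∈ sFin, (-1 : ℂ) ^ ((∑ i, α i : ℕ)) * ∫ x in O, tc α x * multiDerivQ α k x
          = ∑ α ∈ sFin, ∫ q' in O₂,
              (-1 : ℂ) ^ ((∑ i, α i : ℕ)) * (Inn α g q' * h q') := by
            refine Finset.sum_congr rfl fun α _ => ?_
            rw [hstep α, integral_const_mul]
        _ = ∫ q' in O₂, ∑ α ∈ sFin,
              (-1 : ℂ) ^ ((∑ i, α i : ℕ)) * (Inn α g q' * h q') :=
            (integral_finset_sum sFin hint2).symm
        _ = ∫ q' in O₂, T g q' * h q' := by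
            congr 1
            funext q'
            rw [hT, Finset.sum_mul]
            exact (Finset.sum_congr rfl fun α _ => by ring).symm
    · have h0 := (hTgcont.continuousAt (hO2o.mem_nhds h02)).tendsto
      rwa [← hvapp g] at h0
  · refine ⟨O₁, hO1o, h01, C, hC, fun α q => tc α (q, 0), ?_, ?_, ?_, ?_, ?_⟩
    · refine hfin.subset ?_
      intro α hα
      rw [Set.mem_setOf_eq] at hα ⊢
      intro h0
      exact hα (by funext q; simp [h0])
    · intro α
      exact (hcont α).comp (Continuous.continuousOn (Continuous.prodMk continuous_id continuous_const))
        (fun q hq => hsub (Set.mk_mem_prod hq h02))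
    · intro α hlt
      funext q
      simp [hvan α hlt]
    · intro α q hq
      simpa using hbound α (q, 0) (hsub (Set.mk_mem_prod hq h02))
    · intro g _ _
      have hsupp : (Function.support fun α : Fin N → ℕ =>
          (-1 : ℂ) ^ ((∑ i, α i : ℕ))
            * ∫ q in O₁, tc α (q, 0) * multiDerivN α g q) ⊆ ↑sFin := by
        intro α hα
        rw [Function.mem_support] at hα
        rw [Finset.mem_coe, hmem]
        intro h0
        exact hα (by simp [h0])
      rw [finsum_eq_sum_of_support_subset _ hsupp]
      rw [hv, ContinuousLinearMap.sum_apply]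
      refine Finset.sum_congr rfl fun α _ => ?_
      rw [ContinuousLinearMap.smul_apply, ContinuousLinearMap.comp_apply, smul_eq_mul, hLapp]


end
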